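/- arXiv:2508.04690 — 5 statements merged into one kernel-verified Lean document; each statement's English description precedes it below -/
import Mathlib

section
/- Let u : ℝ² → ℝ be a smooth function of the variables (τ, ρ) and let L denote the reduced conformal wave operator. Then for every natural number p and every (τ, ρ) ∈ ℝ², the commutator identity ∂_ρ^p(Lu) − L(∂_ρ^p u) = 2τ p ∂_τ ∂_ρ^p u − 2 p ρ ∂_ρ^{p+1} u − p(p−1) ∂_ρ^p u holds. -/
open Function

/-- Partial derivative in the first variable (`τ`). -/
noncomputable def pdT (u : ℝ → ℝ → ℝ) : ℝ → ℝ → ℝ :=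
  fun τ ρ => deriv (fun s => u s ρ) τ

/-- Partial derivative in the second variable (`ρ`). -/
noncomputable def pdR (u : ℝ → ℝ → ℝ) : ℝ → ℝ → ℝ :=
  fun τ ρ => deriv (fun s => u τ s) ρ

abbrev Sm (u : ℝ → ℝ → ℝ) : Prop := ContDiff ℝ ((⊤ : ℕ∞) : WithTop ℕ∞) (Function.uncurry u)

lemma topsucc : ((⊤ : ℕ∞) : WithTop ℕ∞) + 1 ≤ ((⊤ : ℕ∞) : WithTop ℕ∞) := by
  exact_mod_cast le_rfl

lemma one_le_itop : (1 : WithTop ℕ∞) ≤ ((⊤ : ℕ∞) : WithTop ℕ∞) := by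
  exact_mod_cast le_top

lemma hasDerivAt_T {u : ℝ → ℝ → ℝ} (hu : Sm u) (τ ρ : ℝ) :
    HasDerivAt (fun s => u s ρ) (fderiv ℝ (uncurry u) (τ, ρ) (1, 0)) τ := by
  have h1 : HasFDerivAt (uncurry u) (fderiv ℝ (uncurry u) (τ, ρ)) (τ, ρ) :=
    (hu.differentiable (by simp) (τ, ρ)).hasFDerivAt
  have h2 : HasDerivAt (fun s : ℝ => (s, ρ)) ((1 : ℝ), (0 : ℝ)) τ :=
    (hasDerivAt_id τ).prodMk (hasDerivAt_const τ ρ)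
  exact h1.comp_hasDerivAt τ h2

lemma hasDerivAt_R {u : ℝ → ℝ → ℝ} (hu : Sm u) (τ ρ : ℝ) :
    HasDerivAt (fun s => u τ s) (fderiv ℝ (uncurry u) (τ, ρ) (0, 1)) ρ := by
  have h1 : HasFDerivAt (uncurry u) (fderiv ℝ (uncurry u) (τ, ρ)) (τ, ρ) :=
    (hu.differentiable (by simp) (τ, ρ)).hasFDerivAt
  have h2 : HasDerivAt (fun s : ℝ => (τ, s)) ((0 : ℝ), (1 : ℝ)) ρ :=
    (hasDerivAt_const ρ τ).prodMk (hasDerivAt_id ρ)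
  exact h1.comp_hasDerivAt ρ h2

lemma pdT_eq {u : ℝ → ℝ → ℝ} (hu : Sm u) (τ ρ : ℝ) :
    pdT u τ ρ = fderiv ℝ (uncurry u) (τ, ρ) (1, 0) := (hasDerivAt_T hu τ ρ).deriv

lemma pdR_eq {u : ℝ → ℝ → ℝ} (hu : Sm u) (τ ρ : ℝ) :
    pdR u τ ρ = fderiv ℝ (uncurry u) (τ, ρ) (0, 1) := (hasDerivAt_R hu τ ρ).deriv

lemma smT {u : ℝ → ℝ → ℝ} (hu : Sm u) : Sm (pdT u) := by
  have : uncurry (pdT u) = fun q : ℝ × ℝ => fderiv ℝ (uncurry u) q ((1 : ℝ), (0 : ℝ)) := by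
    funext q
    exact pdT_eq hu q.1 q.2
  show ContDiff ℝ ((⊤ : ℕ∞) : WithTop ℕ∞) (uncurry (pdT u))
  rw [this]
  exact (hu.fderiv_right topsucc).clm_apply contDiff_const

lemma smR {u : ℝ → ℝ → ℝ} (hu : Sm u) : Sm (pdR u) := by
  have : uncurry (pdR u) = fun q : ℝ × ℝ => fderiv ℝ (uncurry u) q ((0 : ℝ), (1 : ℝ)) := by
    funext q
    exact pdR_eq hu q.1 q.2
  show ContDiff ℝ ((⊤ : ℕ∞) : WithTop ℕ∞) (uncurry (pdR u))
  rw [this]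
  exact (hu.fderiv_right topsucc).clm_apply contDiff_const

lemma sliceR {u : ℝ → ℝ → ℝ} (hu : Sm u) (τ ρ : ℝ) :
    HasDerivAt (fun s => u τ s) (pdR u τ ρ) ρ := by
  rw [pdR_eq hu]
  exact hasDerivAt_R hu τ ρ

/-- Clairaut. -/
lemma pdT_pdR_comm {u : ℝ → ℝ → ℝ} (hu : Sm u) (τ ρ : ℝ) :
    pdT (pdR u) τ ρ = pdR (pdT u) τ ρ := by
  set F := uncurry u with hF
  have hf' : ∀ y, HasFDerivAt F (fderiv ℝ F y) y := fun y =>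
    (hu.differentiable (by simp) y).hasFDerivAt
  have hD : Differentiable ℝ (fderiv ℝ F) :=
    (hu.fderiv_right topsucc).differentiable (by simp)
  have hf'' : HasFDerivAt (fderiv ℝ F) (fderiv ℝ (fderiv ℝ F) (τ, ρ)) (τ, ρ) :=
    (hD (τ, ρ)).hasFDerivAt
  set f'' := fderiv ℝ (fderiv ℝ F) (τ, ρ)
  have hsymm := second_derivative_symmetric hf' hf'' ((1 : ℝ), (0 : ℝ)) ((0 : ℝ), (1 : ℝ))
  -- pdT (pdR u) τ ρ = f'' (1,0) (0,1)
  have h1 : HasDerivAt (fun s => fderiv ℝ F (s, ρ)) (f'' (1, 0)) τ :=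
    hf''.comp_hasDerivAt τ ((hasDerivAt_id τ).prodMk (hasDerivAt_const τ ρ))
  have h1' : HasDerivAt (fun s => fderiv ℝ F (s, ρ) ((0 : ℝ), (1 : ℝ))) (f'' (1, 0) (0, 1)) τ :=
    ((ContinuousLinearMap.apply ℝ ℝ ((0 : ℝ), (1 : ℝ))).hasFDerivAt.comp_hasDerivAt τ h1)
  have e1 : pdT (pdR u) τ ρ = f'' (1, 0) (0, 1) := by
    have : (fun s => pdR u s ρ) = fun s => fderiv ℝ F (s, ρ) ((0 : ℝ), (1 : ℝ)) := by
      funext s; exact pdR_eq hu s ρ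
    show deriv (fun s => pdR u s ρ) τ = _
    rw [this]
    exact h1'.deriv
  have h2 : HasDerivAt (fun s => fderiv ℝ F (τ, s)) (f'' (0, 1)) ρ :=
    hf''.comp_hasDerivAt ρ ((hasDerivAt_const ρ τ).prodMk (hasDerivAt_id ρ))
  have h2' : HasDerivAt (fun s => fderiv ℝ F (τ, s) ((1 : ℝ), (0 : ℝ))) (f'' (0, 1) (1, 0)) ρ :=
    ((ContinuousLinearMap.apply ℝ ℝ ((1 : ℝ), (0 : ℝ))).hasFDerivAt.comp_hasDerivAt ρ h2)
  have e2 : pdR (pdT u) τ ρ = f'' (0, 1) (1, 0) := by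
    have : (fun s => pdT u τ s) = fun s => fderiv ℝ F (τ, s) ((1 : ℝ), (0 : ℝ)) := by
      funext s; exact pdT_eq hu τ s
    show deriv (fun s => pdT u τ s) ρ = _
    rw [this]
    exact h2'.deriv
  rw [e1, e2, hsymm]

/-- The reduced conformal wave operator
`(Lu)(τ,ρ) = (1−τ²)∂_τ²u + 2τρ ∂_τ∂_ρ u − ρ² ∂_ρ² u − 2τ ∂_τ u`. -/
noncomputable def Lop (u : ℝ → ℝ → ℝ) : ℝ → ℝ → ℝ :=
  fun τ ρ => (1 - τ ^ 2) * pdT (pdT u) τ ρ + 2 * τ * ρ * pdT (pdR u) τ ρ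
    - ρ ^ 2 * pdR (pdR u) τ ρ - 2 * τ * pdT u τ ρ

lemma smLop {u : ℝ → ℝ → ℝ} (hu : Sm u) : Sm (Lop u) := by
  have : uncurry (Lop u) = fun q : ℝ × ℝ =>
      (1 - q.1 ^ 2) * uncurry (pdT (pdT u)) q + 2 * q.1 * q.2 * uncurry (pdT (pdR u)) q
        - q.2 ^ 2 * uncurry (pdR (pdR u)) q - 2 * q.1 * uncurry (pdT u) q := by
    funext q; rfl
  show ContDiff ℝ ((⊤ : ℕ∞) : WithTop ℕ∞) (uncurry (Lop u))
  rw [this]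
  exact ((((contDiff_const.sub (contDiff_fst.pow 2)).mul (smT (smT hu))).add
      (((contDiff_const.mul contDiff_fst).mul contDiff_snd).mul (smT (smR hu)))).sub
      ((contDiff_snd.pow 2).mul (smR (smR hu)))).sub
      ((contDiff_const.mul contDiff_fst).mul (smT hu))

lemma pdR_Lop {u : ℝ → ℝ → ℝ} (hu : Sm u) (τ ρ : ℝ) :
    pdR (Lop u) τ ρ - Lop (pdR u) τ ρ
      = 2 * τ * pdT (pdR u) τ ρ - 2 * ρ * pdR (pdR u) τ ρ := by
  have hA := sliceR (smT (smT hu)) τ ρ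
  have hB := sliceR (smT (smR hu)) τ ρ
  have hC := sliceR (smR (smR hu)) τ ρ
  have hD := sliceR (smT hu) τ ρ
  have hlin : HasDerivAt (fun s : ℝ => 2 * τ * s) (2 * τ) ρ := by
    simpa using (hasDerivAt_id ρ).const_mul (2 * τ)
  have hsq : HasDerivAt (fun s : ℝ => s ^ 2) (2 * ρ) ρ := by
    simpa using hasDerivAt_pow 2 ρ
  have hsum : HasDerivAt (fun s => Lop u τ s)
      ((1 - τ ^ 2) * pdR (pdT (pdT u)) τ ρ
        + (2 * τ * pdT (pdR u) τ ρ + 2 * τ * ρ * pdR (pdT (pdR u)) τ ρ)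
        - (2 * ρ * pdR (pdR u) τ ρ + ρ ^ 2 * pdR (pdR (pdR u)) τ ρ)
        - 2 * τ * pdR (pdT u) τ ρ) ρ := by
    exact (((hA.const_mul (1 - τ ^ 2)).add (hlin.mul hB)).sub (hsq.mul hC)).sub
      (hD.const_mul (2 * τ))
  have hval : pdR (Lop u) τ ρ
      = (1 - τ ^ 2) * pdR (pdT (pdT u)) τ ρ
        + (2 * τ * pdT (pdR u) τ ρ + 2 * τ * ρ * pdR (pdT (pdR u)) τ ρ)
        - (2 * ρ * pdR (pdR u) τ ρ + ρ ^ 2 * pdR (pdR (pdR u)) τ ρ)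
        - 2 * τ * pdR (pdT u) τ ρ := hsum.deriv
  have c1 : pdR (pdT (pdT u)) τ ρ = pdT (pdT (pdR u)) τ ρ := by
    rw [← pdT_pdR_comm (smT hu) τ ρ]
    congr 1
    funext a b
    exact (pdT_pdR_comm hu a b).symm
  have c2 : pdR (pdT (pdR u)) τ ρ = pdT (pdR (pdR u)) τ ρ := (pdT_pdR_comm (smR hu) τ ρ).symm
  have c3 : pdR (pdT u) τ ρ = pdT (pdR u) τ ρ := (pdT_pdR_comm hu τ ρ).symm
  rw [hval, c1, c2, c3, Lop]
  ring

/-- Commutator of `∂_ρ^p` with the reduced conformal wave operator: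
`∂_ρ^p(Lu) − L(∂_ρ^p u) = 2τp ∂_τ∂_ρ^p u − 2pρ ∂_ρ^{p+1} u − p(p−1) ∂_ρ^p u`. -/
theorem stmt0 (u : ℝ → ℝ → ℝ) (hu : ContDiff ℝ (⊤ : ℕ∞) (Function.uncurry u))
    (p : ℕ) (τ ρ : ℝ) :
    (pdR^[p] (Lop u)) τ ρ - Lop (pdR^[p] u) τ ρ
      = 2 * τ * (p : ℝ) * pdT (pdR^[p] u) τ ρ
        - 2 * (p : ℝ) * ρ * (pdR^[p + 1] u) τ ρ
        - (p : ℝ) * ((p : ℝ) - 1) * (pdR^[p] u) τ ρ := by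
  induction p generalizing τ ρ with
  | zero => simp
  | succ p ih =>
    have hw : Sm (pdR^[p] u) := by
      clear ih
      induction p with
      | zero => exact hu
      | succ q ihq => rw [Function.iterate_succ_apply']; exact smR ihq
    set w := pdR^[p] u with hwdef
    -- rewrite iterates
    have i1 : pdR^[p + 1] (Lop u) = pdR (pdR^[p] (Lop u)) := Function.iterate_succ_apply' _ _ _
    have i2 : pdR^[p + 1] u = pdR w := Function.iterate_succ_apply' _ _ _
    have i3 : pdR^[p + 2] u = pdR (pdR w) := by
      rw [show p + 2 = (p + 1) + 1 from rfl, Function.iterate_succ_apply', i2]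
    -- the function pdR^[p] (Lop u) equals a nice expression (as a function)
    have hfun : pdR^[p] (Lop u) = fun a b =>
        Lop w a b + 2 * a * (p : ℝ) * pdT w a b - 2 * (p : ℝ) * b * pdR w a b
          - (p : ℝ) * ((p : ℝ) - 1) * w a b := by
      funext a b
      have := ih a b
      rw [i2] at this
      linarith
    -- differentiate in ρ
    have hLop := sliceR (smLop hw) τ ρ
    have hTw := sliceR (smT hw) τ ρ
    have hRw := sliceR (smR hw) τ ρ
    have hww := sliceR hw τ ρ
    have hlinr : HasDerivAt (fun s : ℝ => 2 * (p : ℝ) * s) (2 * (p : ℝ)) ρ := by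
      simpa using (hasDerivAt_id ρ).const_mul (2 * (p : ℝ))
    have hsum : HasDerivAt (fun s => pdR^[p] (Lop u) τ s)
        (pdR (Lop w) τ ρ + 2 * τ * (p : ℝ) * pdR (pdT w) τ ρ
          - (2 * (p : ℝ) * pdR w τ ρ + 2 * (p : ℝ) * ρ * pdR (pdR w) τ ρ)
          - (p : ℝ) * ((p : ℝ) - 1) * pdR w τ ρ) ρ := by
      rw [hfun]
      exact ((hLop.add (hTw.const_mul (2 * τ * (p : ℝ)))).sub (hlinr.mul hRw)).sub
        (hww.const_mul ((p : ℝ) * ((p : ℝ) - 1)))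
    have hval : pdR^[p + 1] (Lop u) τ ρ
        = pdR (Lop w) τ ρ + 2 * τ * (p : ℝ) * pdR (pdT w) τ ρ
          - (2 * (p : ℝ) * pdR w τ ρ + 2 * (p : ℝ) * ρ * pdR (pdR w) τ ρ)
          - (p : ℝ) * ((p : ℝ) - 1) * pdR w τ ρ := by
      rw [i1]
      exact hsum.deriv
    have hcomm := pdR_Lop hw τ ρ
    have hc : pdR (pdT w) τ ρ = pdT (pdR w) τ ρ := (pdT_pdR_comm hw τ ρ).symm
    rw [hval, i2, i3, hc]
    push_cast
    ring_nf
    ring_nf at hcomm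
    linarith
end

section
/- Let ℓ be a natural number and let u be a smooth real-valued function on an open set U ⊆ ℝ² containing (−1,1) × {0} which satisfies (Lu)(τ, ρ) + ℓ(ℓ+1) u(τ, ρ) = 0 for all (τ, ρ) ∈ U, where L is the reduced conformal wave operator. Then for every natural number p, the function a_p(τ) := (∂_ρ^p u)(τ, 0) satisfies the Jacobi-type ODE with parameters (p, ℓ) on (−1,1). -/
namespace Stmt1Aux

open Function Filter

variable {v : ℝ → ℝ → ℝ} {U : Set (ℝ × ℝ)}

lemma hasDerivAt_T {τ ρ : ℝ} (hv : DifferentiableAt ℝ (uncurry v) (τ, ρ)) :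
    HasDerivAt (fun s => v s ρ) (fderiv ℝ (uncurry v) (τ, ρ) (1, 0)) τ := by
  have h := hv.hasFDerivAt
  have hg : HasDerivAt (fun s : ℝ => ((s, ρ) : ℝ × ℝ)) ((1 : ℝ), (0 : ℝ)) τ :=
    (hasDerivAt_id τ).prodMk (hasDerivAt_const τ ρ)
  exact h.comp_hasDerivAt τ hg

lemma hasDerivAt_R {τ ρ : ℝ} (hv : DifferentiableAt ℝ (uncurry v) (τ, ρ)) :
    HasDerivAt (fun s => v τ s) (fderiv ℝ (uncurry v) (τ, ρ) (0, 1)) ρ := by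
  have h := hv.hasFDerivAt
  have hg : HasDerivAt (fun s : ℝ => ((τ, s) : ℝ × ℝ)) ((0 : ℝ), (1 : ℝ)) ρ :=
    (hasDerivAt_const ρ τ).prodMk (hasDerivAt_id ρ)
  exact h.comp_hasDerivAt ρ hg

lemma mem_diff (hU : IsOpen U) (hv : ContDiffOn ℝ (⊤ : ℕ∞) (uncurry v) U)
    {x : ℝ × ℝ} (hx : x ∈ U) : DifferentiableAt ℝ (uncurry v) x :=
  (hv.contDiffAt (hU.mem_nhds hx)).differentiableAt (by simp)

lemma pdT_eq (hU : IsOpen U) (hv : ContDiffOn ℝ (⊤ : ℕ∞) (uncurry v) U)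
    {τ ρ : ℝ} (hx : (τ, ρ) ∈ U) :
    pdT v τ ρ = fderiv ℝ (uncurry v) (τ, ρ) (1, 0) :=
  (hasDerivAt_T (mem_diff hU hv hx)).deriv

lemma pdR_eq (hU : IsOpen U) (hv : ContDiffOn ℝ (⊤ : ℕ∞) (uncurry v) U)
    {τ ρ : ℝ} (hx : (τ, ρ) ∈ U) :
    pdR v τ ρ = fderiv ℝ (uncurry v) (τ, ρ) (0, 1) :=
  (hasDerivAt_R (mem_diff hU hv hx)).deriv

lemma smooth_pdT (hU : IsOpen U) (hv : ContDiffOn ℝ (⊤ : ℕ∞) (uncurry v) U) :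
    ContDiffOn ℝ (⊤ : ℕ∞) (uncurry (pdT v)) U := by
  have h1 : ContDiffOn ℝ (⊤ : ℕ∞)
      (fun x : ℝ × ℝ => fderiv ℝ (uncurry v) x ((1 : ℝ), (0 : ℝ))) U :=
    (hv.fderiv_of_isOpen hU (by simp)).clm_apply contDiffOn_const
  exact h1.congr fun x hx => by
    obtain ⟨τ, ρ⟩ := x; exact pdT_eq hU hv hx

lemma smooth_pdR (hU : IsOpen U) (hv : ContDiffOn ℝ (⊤ : ℕ∞) (uncurry v) U) :
    ContDiffOn ℝ (⊤ : ℕ∞) (uncurry (pdR v)) U := by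
  have h1 : ContDiffOn ℝ (⊤ : ℕ∞)
      (fun x : ℝ × ℝ => fderiv ℝ (uncurry v) x ((0 : ℝ), (1 : ℝ))) U :=
    (hv.fderiv_of_isOpen hU (by simp)).clm_apply contDiffOn_const
  exact h1.congr fun x hx => by
    obtain ⟨τ, ρ⟩ := x; exact pdR_eq hU hv hx

lemma hasDerivAt_pdR (hU : IsOpen U) (hv : ContDiffOn ℝ (⊤ : ℕ∞) (uncurry v) U)
    {τ ρ : ℝ} (hx : (τ, ρ) ∈ U) :
    HasDerivAt (fun s => v τ s) (pdR v τ ρ) ρ := by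
  have h := hasDerivAt_R (mem_diff hU hv hx)
  rwa [← pdR_eq hU hv hx] at h

lemma swap (hU : IsOpen U) (hv : ContDiffOn ℝ (⊤ : ℕ∞) (uncurry v) U)
    {τ ρ : ℝ} (hx : (τ, ρ) ∈ U) :
    pdR (pdT v) τ ρ = pdT (pdR v) τ ρ := by
  set f := uncurry v with hf
  have hf' : ContDiffOn ℝ (⊤ : ℕ∞) (fderiv ℝ f) U := hv.fderiv_of_isOpen hU (by simp)
  have hdf' : DifferentiableAt ℝ (fderiv ℝ f) (τ, ρ) :=
    (hf'.contDiffAt (hU.mem_nhds hx)).differentiableAt (by simp)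
  have hev : ∀ᶠ y in nhds (τ, ρ), HasFDerivAt f (fderiv ℝ f y) y := by
    filter_upwards [hU.mem_nhds hx] with y hy
    exact (mem_diff hU hv hy).hasFDerivAt
  have hsym := second_derivative_symmetric_of_eventually hev hdf'.hasFDerivAt
  -- compute pdR (pdT v)
  have hT : uncurry (pdT v) =ᶠ[nhds (τ, ρ)] fun y => fderiv ℝ f y ((1 : ℝ), (0 : ℝ)) := by
    filter_upwards [hU.mem_nhds hx] with y hy
    obtain ⟨a, b⟩ := y
    exact pdT_eq hU hv hy
  have hR : uncurry (pdR v) =ᶠ[nhds (τ, ρ)] fun y => fderiv ℝ f y ((0 : ℝ), (1 : ℝ)) := by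
    filter_upwards [hU.mem_nhds hx] with y hy
    obtain ⟨a, b⟩ := y
    exact pdR_eq hU hv hy
  have hA : HasFDerivAt (fun y => fderiv ℝ f y ((1 : ℝ), (0 : ℝ)))
      ((ContinuousLinearMap.apply ℝ ℝ ((1 : ℝ), (0 : ℝ))).comp
        (fderiv ℝ (fderiv ℝ f) (τ, ρ))) (τ, ρ) :=
    (ContinuousLinearMap.apply ℝ ℝ ((1 : ℝ), (0 : ℝ))).hasFDerivAt.comp _ hdf'.hasFDerivAt
  have hB : HasFDerivAt (fun y => fderiv ℝ f y ((0 : ℝ), (1 : ℝ)))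
      ((ContinuousLinearMap.apply ℝ ℝ ((0 : ℝ), (1 : ℝ))).comp
        (fderiv ℝ (fderiv ℝ f) (τ, ρ))) (τ, ρ) :=
    (ContinuousLinearMap.apply ℝ ℝ ((0 : ℝ), (1 : ℝ))).hasFDerivAt.comp _ hdf'.hasFDerivAt
  have e1 : pdR (pdT v) τ ρ = fderiv ℝ (fderiv ℝ f) (τ, ρ) (0, 1) (1, 0) := by
    rw [pdR_eq hU (smooth_pdT hU hv) hx, hT.fderiv_eq, hA.fderiv]
    rfl
  have e2 : pdT (pdR v) τ ρ = fderiv ℝ (fderiv ℝ f) (τ, ρ) (1, 0) (0, 1) := by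
    rw [pdT_eq hU (smooth_pdR hU hv) hx, hR.fderiv_eq, hB.fderiv]
    rfl
  rw [e1, e2, hsym]

lemma pdT_congr {w : ℝ → ℝ → ℝ} (hU : IsOpen U)
    (h : ∀ y ∈ U, v y.1 y.2 = w y.1 y.2) {τ ρ : ℝ} (hx : (τ, ρ) ∈ U) :
    pdT v τ ρ = pdT w τ ρ := by
  apply Filter.EventuallyEq.deriv_eq
  have hc : Continuous (fun s : ℝ => ((s, ρ) : ℝ × ℝ)) :=
    continuous_id.prodMk continuous_const
  have hmem : {s : ℝ | (s, ρ) ∈ U} ∈ nhds τ :=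
    (hU.preimage hc).mem_nhds hx
  filter_upwards [hmem] with s hs
  exact h (s, ρ) hs

end Stmt1Aux

open Stmt1Aux Function Filter

/-- If `u` is a smooth solution of `Lu + ℓ(ℓ+1)u = 0` on an open set `U` containing
`(−1,1) × {0}`, then for every `p` the restriction `a_p(τ) = (∂_ρ^p u)(τ,0)` satisfies the
Jacobi-type ODE `(1−τ²)a'' + 2(p−1)τ a' + (ℓ(ℓ+1) − p(p−1))a = 0` on `(−1,1)`. -/
theorem stmt1 (ℓ : ℕ) (U : Set (ℝ × ℝ)) (hUopen : IsOpen U)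
    (hUsub : (Set.Ioo (-1 : ℝ) 1 ×ˢ ({0} : Set ℝ)) ⊆ U)
    (u : ℝ → ℝ → ℝ) (hu : ContDiffOn ℝ (⊤ : ℕ∞) (Function.uncurry u) U)
    (heq : ∀ τ ρ : ℝ, (τ, ρ) ∈ U → Lop u τ ρ + (ℓ : ℝ) * ((ℓ : ℝ) + 1) * u τ ρ = 0)
    (p : ℕ) :
    ∀ τ ∈ Set.Ioo (-1 : ℝ) 1,
      (1 - τ ^ 2) * deriv (deriv (fun s => (pdR^[p] u) s 0)) τ
        + 2 * ((p : ℝ) - 1) * τ * deriv (fun s => (pdR^[p] u) s 0) τ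
        + ((ℓ : ℝ) * ((ℓ : ℝ) + 1) - (p : ℝ) * ((p : ℝ) - 1)) * (pdR^[p] u) τ 0 = 0 := by
  set lam : ℝ := (ℓ : ℝ) * ((ℓ : ℝ) + 1) with hlam
  -- smoothness of iterated ρ-derivatives
  have hsm : ∀ q : ℕ, ContDiffOn ℝ (⊤ : ℕ∞) (uncurry (pdR^[q] u)) U := by
    intro q
    induction q with
    | zero => exact hu
    | succ q ih =>
        rw [Function.iterate_succ_apply']
        exact smooth_pdR hUopen ih
  -- the key identity, by induction on q
  have key : ∀ q : ℕ, ∀ τ ρ : ℝ, (τ, ρ) ∈ U →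
      (1 - τ ^ 2) * pdT (pdT (pdR^[q] u)) τ ρ
      + 2 * τ * ρ * pdT (pdR (pdR^[q] u)) τ ρ
      + 2 * (q : ℝ) * τ * pdT (pdR^[q] u) τ ρ
      - ρ ^ 2 * pdR (pdR (pdR^[q] u)) τ ρ
      - 2 * (q : ℝ) * ρ * pdR (pdR^[q] u) τ ρ
      - (q : ℝ) * ((q : ℝ) - 1) * (pdR^[q] u) τ ρ
      - 2 * τ * pdT (pdR^[q] u) τ ρ
      + lam * (pdR^[q] u) τ ρ = 0 := by
    intro q
    induction q with
    | zero =>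
        intro τ ρ hmem
        have h0 := heq τ ρ hmem
        simp only [Lop] at h0
        simp only [Function.iterate_zero, id_eq, Nat.cast_zero]
        linear_combination h0
    | succ q ih =>
        intro τ ρ hmem
        set v : ℝ → ℝ → ℝ := pdR^[q] u with hv
        have hsv : ContDiffOn ℝ (⊤ : ℕ∞) (uncurry v) U := hsm q
        have hsvR : ContDiffOn ℝ (⊤ : ℕ∞) (uncurry (pdR v)) U := smooth_pdR hUopen hsv
        have hsvT : ContDiffOn ℝ (⊤ : ℕ∞) (uncurry (pdT v)) U := smooth_pdT hUopen hsv
        -- the function of ρ given by the LHS of `ih` at fixed τ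
        set g : ℝ → ℝ := fun s =>
          (1 - τ ^ 2) * pdT (pdT v) τ s
          + 2 * τ * s * pdT (pdR v) τ s
          + 2 * (q : ℝ) * τ * pdT v τ s
          - s ^ 2 * pdR (pdR v) τ s
          - 2 * (q : ℝ) * s * pdR v τ s
          - (q : ℝ) * ((q : ℝ) - 1) * v τ s
          - 2 * τ * pdT v τ s
          + lam * v τ s with hgdef
        have hc : Continuous (fun s : ℝ => ((τ, s) : ℝ × ℝ)) :=
          continuous_const.prodMk continuous_id
        have hUs : {s : ℝ | (τ, s) ∈ U} ∈ nhds ρ := (hUopen.preimage hc).mem_nhds hmem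
        have hg0 : g =ᶠ[nhds ρ] fun _ => (0 : ℝ) := by
          filter_upwards [hUs] with s hs
          exact ih τ s hs
        have hdg0 : deriv g ρ = 0 := by
          rw [hg0.deriv_eq]; exact deriv_const ρ 0
        -- compute the derivative of g
        have hD : HasDerivAt g
            ((1 - τ ^ 2) * pdR (pdT (pdT v)) τ ρ
            + ((2 * τ) * pdT (pdR v) τ ρ + (2 * τ * ρ) * pdR (pdT (pdR v)) τ ρ)
            + 2 * (q : ℝ) * τ * pdR (pdT v) τ ρ
            - ((2 : ℕ) * ρ ^ 1 * pdR (pdR v) τ ρ + ρ ^ 2 * pdR (pdR (pdR v)) τ ρ)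
            - ((2 * (q : ℝ)) * pdR v τ ρ + (2 * (q : ℝ) * ρ) * pdR (pdR v) τ ρ)
            - (q : ℝ) * ((q : ℝ) - 1) * pdR v τ ρ
            - 2 * τ * pdR (pdT v) τ ρ
            + lam * pdR v τ ρ) ρ := by
          have h1 : HasDerivAt (fun s => pdT (pdT v) τ s) (pdR (pdT (pdT v)) τ ρ) ρ :=
            hasDerivAt_pdR hUopen (smooth_pdT hUopen hsvT) hmem
          have h2 : HasDerivAt (fun s => pdT (pdR v) τ s) (pdR (pdT (pdR v)) τ ρ) ρ :=
            hasDerivAt_pdR hUopen (smooth_pdT hUopen hsvR) hmem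
          have h3 : HasDerivAt (fun s => pdT v τ s) (pdR (pdT v) τ ρ) ρ :=
            hasDerivAt_pdR hUopen hsvT hmem
          have h4 : HasDerivAt (fun s => pdR (pdR v) τ s) (pdR (pdR (pdR v)) τ ρ) ρ :=
            hasDerivAt_pdR hUopen (smooth_pdR hUopen hsvR) hmem
          have h5 : HasDerivAt (fun s => pdR v τ s) (pdR (pdR v) τ ρ) ρ :=
            hasDerivAt_pdR hUopen hsvR hmem
          have h6 : HasDerivAt (fun s => v τ s) (pdR v τ ρ) ρ :=
            hasDerivAt_pdR hUopen hsv hmem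
          have hlin : HasDerivAt (fun s : ℝ => 2 * τ * s) (2 * τ) ρ := by
            simpa using (hasDerivAt_id ρ).const_mul (2 * τ)
          have hlin2 : HasDerivAt (fun s : ℝ => 2 * (q : ℝ) * s) (2 * (q : ℝ)) ρ := by
            simpa using (hasDerivAt_id ρ).const_mul (2 * (q : ℝ))
          have hsq : HasDerivAt (fun s : ℝ => s ^ 2) ((2 : ℕ) * ρ ^ 1) ρ :=
            hasDerivAt_pow 2 ρ
          exact (((((((h1.const_mul (1 - τ ^ 2)).add (hlin.mul h2)).add
            (h3.const_mul (2 * (q : ℝ) * τ))).sub (hsq.mul h4)).sub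
            (hlin2.mul h5)).sub (h6.const_mul ((q : ℝ) * ((q : ℝ) - 1)))).sub
            (h3.const_mul (2 * τ))).add (h6.const_mul lam)
        have hDval := hD.deriv
        rw [hdg0] at hDval
        -- swap mixed partials
        have s3 : pdR (pdT v) τ ρ = pdT (pdR v) τ ρ := swap hUopen hsv hmem
        have s2 : pdR (pdT (pdR v)) τ ρ = pdT (pdR (pdR v)) τ ρ := swap hUopen hsvR hmem
        have s1 : pdR (pdT (pdT v)) τ ρ = pdT (pdT (pdR v)) τ ρ := by
          rw [swap hUopen hsvT hmem]
          exact pdT_congr hUopen (fun y hy => swap hUopen hsv hy) hmem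
        rw [s1, s2, s3] at hDval
        rw [Function.iterate_succ_apply']
        push_cast
        linear_combination -hDval
  -- conclude
  intro τ hτ
  have hmem : (τ, (0 : ℝ)) ∈ U := hUsub ⟨hτ, rfl⟩
  have hkey := key p τ 0 hmem
  have e1 : deriv (fun s => (pdR^[p] u) s 0) = fun s => pdT (pdR^[p] u) s 0 := rfl
  have e2 : deriv (fun s => pdT (pdR^[p] u) s 0) τ = pdT (pdT (pdR^[p] u)) τ 0 := rfl
  rw [e1, e2]
  linear_combination hkey
end

section
/- Let p ≥ 0 be an integer. A twice differentiable function a : (−1,1) → ℝ satisfies (1−τ²) a''(τ) + 2(p−1)τ a'(τ) + 2p a(τ) = 0 on (−1,1) if and only if there exist real constants c and d such that a(τ) = ((1−τ)/2)^p ((1+τ)/2)^p · ( c + d ∫₀^τ (1−s²)^{−(p+1)} ds ) for all τ ∈ (−1,1). -/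
open Set intervalIntegral

/-- first derivative of the weight -/
lemma jacV (p : ℕ) (τ : ℝ) :
    HasDerivAt (fun t : ℝ => ((1 - t^2)/4)^p)
      ((p:ℝ) * ((1-τ^2)/4)^(p-1) * (-τ/2)) τ := by
  have h : HasDerivAt (fun t : ℝ => (1 - t^2)/4) (-τ/2) τ := by
    have := ((hasDerivAt_pow 2 τ).const_sub 1).div_const 4
    exact this.congr_deriv (by push_cast; ring)
  exact h.pow p

/-- second derivative of the weight -/
lemma jacV2 (p : ℕ) (τ : ℝ) :
    HasDerivAt (fun t : ℝ => (p:ℝ) * ((1 - t^2)/4)^(p-1) * (-t/2))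
      (((p:ℝ) * (((p-1 : ℕ):ℝ) * ((1-τ^2)/4)^(p-1-1) * (-τ/2))) * (-τ/2)
        + ((p:ℝ) * ((1-τ^2)/4)^(p-1)) * (-1/2)) τ := by
  have h1 : HasDerivAt (fun t : ℝ => (p:ℝ) * ((1 - t^2)/4)^(p-1))
      ((p:ℝ) * (((p-1 : ℕ):ℝ) * ((1-τ^2)/4)^(p-1-1) * (-τ/2))) τ := (jacV (p-1) τ).const_mul _
  have h2 : HasDerivAt (fun t : ℝ => -t/2) (-1/2 : ℝ) τ := by
    simpa using (hasDerivAt_id τ).neg.div_const 2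
  exact h1.mul h2

lemma key1 (p : ℕ) (τ : ℝ) :
    (1 - τ^2) * ((p:ℝ) * ((1-τ^2)/4)^(p-1) * (-τ/2)) = -2*(p:ℝ)*τ*((1-τ^2)/4)^p := by
  cases p with
  | zero => norm_num
  | succ k => push_cast [Nat.add_sub_cancel]; ring

/-- weight satisfies the ODE -/
lemma key2 (p : ℕ) (τ : ℝ) :
    (1 - τ^2) * (((p:ℝ) * (((p-1 : ℕ):ℝ) * ((1-τ^2)/4)^(p-1-1) * (-τ/2))) * (-τ/2)
        + ((p:ℝ) * ((1-τ^2)/4)^(p-1)) * (-1/2))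
      + 2*((p:ℝ)-1)*τ*((p:ℝ) * ((1-τ^2)/4)^(p-1) * (-τ/2))
      + 2*(p:ℝ)*((1-τ^2)/4)^p = 0 := by
  match p with
  | 0 => norm_num
  | 1 => norm_num [pow_zero]; ring
  | (k+2) =>
    push_cast [show k+2-1 = k+1 from rfl, show k+2-1-1 = k from rfl]
    ring

/-- FTC for the integral factor -/
lemma ftcJ (p : ℕ) {τ : ℝ} (hτ : τ ∈ Set.Ioo (-1:ℝ) 1) :
    HasDerivAt (fun t => ∫ s in (0:ℝ)..t, ((1 - s^2)^(p+1))⁻¹) (((1-τ^2)^(p+1))⁻¹) τ := by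
  have h0 : (0:ℝ) ∈ Set.Ioo (-1:ℝ) 1 := by norm_num
  have hco : ContinuousOn (fun s : ℝ => ((1 - s^2)^(p+1))⁻¹) (Set.Ioo (-1:ℝ) 1) := by
    intro s hs
    have hne : (1 - s^2) ≠ 0 := by nlinarith [hs.1, hs.2]
    exact (((continuous_const.sub (continuous_pow 2)).pow _).continuousAt.continuousWithinAt).inv₀
      (pow_ne_zero _ hne)
  have hsub : Set.uIcc (0:ℝ) τ ⊆ Set.Ioo (-1:ℝ) 1 :=
    Set.ordConnected_Ioo.uIcc_subset h0 hτ
  exact intervalIntegral.integral_hasDerivAt_right (hco.mono hsub).intervalIntegrable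
    (hco.stronglyMeasurableAtFilter isOpen_Ioo τ hτ)
    (hco.continuousAt (isOpen_Ioo.mem_nhds hτ))

lemma key3 (p : ℕ) {τ : ℝ} (h : (1:ℝ) - τ^2 ≠ 0) :
    (1 - τ^2) * (-(((p:ℝ)+1) * (1-τ^2)^p * (-(2*τ^1))) / ((1-τ^2)^(p+1))^2)
      = 2*((p:ℝ)+1)*τ*((1-τ^2)^(p+1))⁻¹ := by
  have h2 : (1-τ^2)^(p+1) ≠ 0 := pow_ne_zero _ h
  field_simp
  ring

lemma constIoo {f : ℝ → ℝ} (hf : ∀ x ∈ Set.Ioo (-1:ℝ) 1, HasDerivAt f 0 x) {x y : ℝ}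
    (hx : x ∈ Set.Ioo (-1:ℝ) 1) (hy : y ∈ Set.Ioo (-1:ℝ) 1) : f x = f y := by
  refine (convex_Ioo (-1:ℝ) 1).is_const_of_fderivWithin_eq_zero
    (fun z hz => (hf z hz).differentiableAt.differentiableWithinAt) (fun z hz => ?_) hx hy
  rw [fderivWithin_of_isOpen isOpen_Ioo hz, (hf z hz).hasFDerivAt.fderiv]
  ext; simp

lemma mprDir (p : ℕ) (a : ℝ → ℝ) (c d : ℝ)
    (hcd : ∀ τ ∈ Set.Ioo (-1 : ℝ) 1,
      a τ = ((1 - τ^2)/4) ^ p * (c + d * ∫ s in (0 : ℝ)..τ, ((1 - s ^ 2) ^ (p + 1))⁻¹)) :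
    ∀ τ ∈ Set.Ioo (-1 : ℝ) 1,
      (1 - τ ^ 2) * deriv (deriv a) τ + 2 * ((p : ℝ) - 1) * τ * deriv a τ
        + 2 * (p : ℝ) * a τ = 0 := by
  set F : ℝ → ℝ := fun t => ∫ s in (0 : ℝ)..t, ((1 - s ^ 2) ^ (p + 1))⁻¹ with hF
  -- first derivative of the explicit solution
  have HD1 : ∀ σ ∈ Set.Ioo (-1 : ℝ) 1,
      HasDerivAt (fun t => ((1 - t^2)/4) ^ p * (c + d * F t))
        ((p:ℝ) * ((1-σ^2)/4)^(p-1) * (-σ/2) * (c + d * F σ)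
          + ((1-σ^2)/4)^p * (d * ((1-σ^2)^(p+1))⁻¹)) σ := by
    intro σ hσ
    exact (jacV p σ).mul (((ftcJ p hσ).const_mul d).const_add c)
  -- deriv a agrees with it on the interval
  have hda : ∀ σ ∈ Set.Ioo (-1 : ℝ) 1,
      deriv a σ = (p:ℝ) * ((1-σ^2)/4)^(p-1) * (-σ/2) * (c + d * F σ)
          + ((1-σ^2)/4)^p * (d * ((1-σ^2)^(p+1))⁻¹) := by
    intro σ hσ
    have hev : a =ᶠ[nhds σ] (fun t => ((1 - t^2)/4) ^ p * (c + d * F t)) :=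
      Filter.eventuallyEq_of_mem (isOpen_Ioo.mem_nhds hσ) hcd
    rw [hev.deriv_eq, (HD1 σ hσ).deriv]
  intro τ hτ
  have hPpos : (0:ℝ) < 1 - τ^2 := by nlinarith [hτ.1, hτ.2]
  have hPne : (1:ℝ) - τ^2 ≠ 0 := ne_of_gt hPpos
  -- second derivative
  have Hg : HasDerivAt (fun t : ℝ => ((1-t^2)^(p+1))⁻¹)
      (-(((p:ℝ)+1) * (1-τ^2)^p * (-(2*τ^1))) / ((1-τ^2)^(p+1))^2) τ := by
    have Hpow : HasDerivAt (fun t : ℝ => (1-t^2)^(p+1))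
        (((p+1 : ℕ):ℝ) * (1-τ^2)^(p+1-1) * (-(2*τ^1))) τ := by
      have hb : HasDerivAt (fun t : ℝ => 1 - t^2) (-((2:ℕ):ℝ) * τ^1) τ := by
        simpa using (hasDerivAt_pow 2 τ).const_sub 1
      exact (hb.pow (p+1)).congr_deriv (by push_cast; ring)
    have := Hpow.inv (pow_ne_zero _ hPne)
    push_cast [Nat.add_sub_cancel] at this ⊢
    exact this
  have HD2 : HasDerivAt (fun σ => (p:ℝ) * ((1-σ^2)/4)^(p-1) * (-σ/2) * (c + d * F σ)
          + ((1-σ^2)/4)^p * (d * ((1-σ^2)^(p+1))⁻¹))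
      (((p:ℝ) * (((p-1 : ℕ):ℝ) * ((1-τ^2)/4)^(p-1-1) * (-τ/2)) * (-τ/2)
          + (p:ℝ) * ((1-τ^2)/4)^(p-1) * (-1/2)) * (c + d * F τ)
        + (p:ℝ) * ((1-τ^2)/4)^(p-1) * (-τ/2) * (d * ((1-τ^2)^(p+1))⁻¹)
        + ((p:ℝ) * ((1-τ^2)/4)^(p-1) * (-τ/2) * (d * ((1-τ^2)^(p+1))⁻¹)
          + ((1-τ^2)/4)^p * (d * (-(((p:ℝ)+1) * (1-τ^2)^p * (-(2*τ^1))) / ((1-τ^2)^(p+1))^2)))) τ := by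
    have h1 := ((jacV2 p τ).mul (((ftcJ p hτ).const_mul d).const_add c)).add
      ((jacV p τ).mul (Hg.const_mul d))
    exact h1
  have hdd : deriv (deriv a) τ
      = ((p:ℝ) * (((p-1 : ℕ):ℝ) * ((1-τ^2)/4)^(p-1-1) * (-τ/2)) * (-τ/2)
          + (p:ℝ) * ((1-τ^2)/4)^(p-1) * (-1/2)) * (c + d * F τ)
        + (p:ℝ) * ((1-τ^2)/4)^(p-1) * (-τ/2) * (d * ((1-τ^2)^(p+1))⁻¹)
        + ((p:ℝ) * ((1-τ^2)/4)^(p-1) * (-τ/2) * (d * ((1-τ^2)^(p+1))⁻¹)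
          + ((1-τ^2)/4)^p * (d * (-(((p:ℝ)+1) * (1-τ^2)^p * (-(2*τ^1))) / ((1-τ^2)^(p+1))^2))) := by
    have hev : deriv a =ᶠ[nhds τ] (fun σ => (p:ℝ) * ((1-σ^2)/4)^(p-1) * (-σ/2) * (c + d * F σ)
          + ((1-σ^2)/4)^p * (d * ((1-σ^2)^(p+1))⁻¹)) :=
      Filter.eventuallyEq_of_mem (isOpen_Ioo.mem_nhds hτ) hda
    rw [hev.deriv_eq, HD2.deriv]
  rw [hdd, hda τ hτ, hcd τ hτ]
  have e2 := key2 p τ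
  have e1 := key1 p τ
  have e3 := key3 p hPne
  linear_combination (c + d * F τ) * e2 + (2 * d * ((1-τ^2)^(p+1))⁻¹) * e1
    + (d * ((1-τ^2)/4)^p) * e3

lemma jacU (p : ℕ) (τ : ℝ) :
    HasDerivAt (fun t : ℝ => (1 - t^2)^p) ((p:ℝ) * (1-τ^2)^(p-1) * (-(2*τ))) τ := by
  have h : HasDerivAt (fun t : ℝ => 1 - t^2) (-(2*τ)) τ := by
    have := (hasDerivAt_pow 2 τ).const_sub 1
    exact this.congr_deriv (by push_cast; ring)
  exact h.pow p

lemma jacU2 (p : ℕ) (τ : ℝ) :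
    HasDerivAt (fun t : ℝ => (p:ℝ) * (1 - t^2)^(p-1) * (-(2*t)))
      (((p:ℝ) * (((p-1 : ℕ):ℝ) * (1-τ^2)^(p-1-1) * (-(2*τ)))) * (-(2*τ))
        + ((p:ℝ) * (1-τ^2)^(p-1)) * (-2)) τ := by
  have h1 : HasDerivAt (fun t : ℝ => (p:ℝ) * (1 - t^2)^(p-1))
      ((p:ℝ) * (((p-1 : ℕ):ℝ) * (1-τ^2)^(p-1-1) * (-(2*τ)))) τ := (jacU (p-1) τ).const_mul _
  have h2 : HasDerivAt (fun t : ℝ => -(2*t)) (-2 : ℝ) τ := by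
    exact (((hasDerivAt_id τ).const_mul (2:ℝ)).neg).congr_deriv (by norm_num)
  exact h1.mul h2

lemma key1U (p : ℕ) (τ : ℝ) :
    (1 - τ^2) * ((p:ℝ) * (1-τ^2)^(p-1) * (-(2*τ))) = -2*(p:ℝ)*τ*(1-τ^2)^p := by
  cases p with
  | zero => norm_num
  | succ k => push_cast [Nat.add_sub_cancel]; ring

lemma key2U (p : ℕ) (τ : ℝ) :
    (1 - τ^2) * (((p:ℝ) * (((p-1 : ℕ):ℝ) * (1-τ^2)^(p-1-1) * (-(2*τ)))) * (-(2*τ))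
        + ((p:ℝ) * (1-τ^2)^(p-1)) * (-2))
      + 2*((p:ℝ)-1)*τ*((p:ℝ) * (1-τ^2)^(p-1) * (-(2*τ)))
      + 2*(p:ℝ)*(1-τ^2)^p = 0 := by
  match p with
  | 0 => norm_num
  | 1 => norm_num [pow_zero]; ring
  | (k+2) =>
    push_cast [show k+2-1 = k+1 from rfl, show k+2-1-1 = k from rfl]
    ring

lemma mpDir (p : ℕ) (a : ℝ → ℝ)
    (ha : ∀ τ ∈ Set.Ioo (-1 : ℝ) 1, DifferentiableAt ℝ a τ)
    (ha' : ∀ τ ∈ Set.Ioo (-1 : ℝ) 1, DifferentiableAt ℝ (deriv a) τ)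
    (hode : ∀ τ ∈ Set.Ioo (-1 : ℝ) 1,
        (1 - τ ^ 2) * deriv (deriv a) τ + 2 * ((p : ℝ) - 1) * τ * deriv a τ
          + 2 * (p : ℝ) * a τ = 0) :
    ∃ c d : ℝ, ∀ τ ∈ Set.Ioo (-1 : ℝ) 1,
      a τ = (1 - τ^2) ^ p * (c + d * ∫ s in (0 : ℝ)..τ, ((1 - s ^ 2) ^ (p + 1))⁻¹) := by
  have h0I : (0:ℝ) ∈ Set.Ioo (-1:ℝ) 1 := by norm_num
  set F : ℝ → ℝ := fun t => ∫ s in (0 : ℝ)..t, ((1 - s ^ 2) ^ (p + 1))⁻¹ with hF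
  set W : ℝ → ℝ := fun t => deriv a t * (1-t^2)^p
    - a t * ((p:ℝ) * (1-t^2)^(p-1) * (-(2*t))) with hW
  set h : ℝ → ℝ := fun t => (1-t^2) * W t * ((1-t^2)^p)⁻¹ with hh
  -- the rescaled Wronskian is constant
  have step1 : ∀ τ ∈ Set.Ioo (-1:ℝ) 1, HasDerivAt h 0 τ := by
    intro τ hτ
    have hPpos : (0:ℝ) < 1 - τ^2 := by nlinarith [hτ.1, hτ.2]
    have hPne : (1:ℝ) - τ^2 ≠ 0 := ne_of_gt hPpos
    have hvne : (1-τ^2)^p ≠ 0 := pow_ne_zero _ hPne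
    have HW : HasDerivAt W
        (deriv (deriv a) τ * (1-τ^2)^p + deriv a τ * ((p:ℝ) * (1-τ^2)^(p-1) * (-(2*τ)))
          - (deriv a τ * ((p:ℝ) * (1-τ^2)^(p-1) * (-(2*τ)))
            + a τ * (((p:ℝ) * (((p-1 : ℕ):ℝ) * (1-τ^2)^(p-1-1) * (-(2*τ)))) * (-(2*τ))
              + ((p:ℝ) * (1-τ^2)^(p-1)) * (-2)))) τ := by
      exact (((ha' τ hτ).hasDerivAt).mul (jacU p τ)).sub
        (((ha τ hτ).hasDerivAt).mul (jacU2 p τ))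
    have Hlin : HasDerivAt (fun t : ℝ => 1 - t^2) (-(2*τ^1) : ℝ) τ := by
      simpa using (hasDerivAt_pow 2 τ).const_sub 1
    have Hinv : HasDerivAt (fun t : ℝ => ((1-t^2)^p)⁻¹)
        (-((p:ℝ) * (1-τ^2)^(p-1) * (-(2*τ))) / ((1-τ^2)^p)^2) τ := (jacU p τ).inv hvne
    have Hh := (Hlin.mul HW).mul Hinv
    have e1 := hode τ hτ
    have e2 := key2U p τ
    have e3 := key1U p τ
    refine Hh.congr_deriv (Eq.symm ?_)
    simp only [Pi.mul_apply]
    have hWp : -(2*τ^1) * W τ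
        + (1 - τ^2) * (deriv (deriv a) τ * (1-τ^2)^p
            + deriv a τ * ((p:ℝ) * (1-τ^2)^(p-1) * (-(2*τ)))
          - (deriv a τ * ((p:ℝ) * (1-τ^2)^(p-1) * (-(2*τ)))
            + a τ * (((p:ℝ) * (((p-1 : ℕ):ℝ) * (1-τ^2)^(p-1-1) * (-(2*τ)))) * (-(2*τ))
              + ((p:ℝ) * (1-τ^2)^(p-1)) * (-2))))
        = -2*(p:ℝ)*τ*W τ := by
      simp only [hW]
      linear_combination (1-τ^2)^p * e1 - a τ * e2
    rw [hWp]
    have hv1 : ((p:ℝ) * (1-τ^2)^(p-1) * (-(2*τ)))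
        = -2*(p:ℝ)*τ*(1-τ^2)^p / (1-τ^2) := by
      rw [eq_div_iff hPne]
      linear_combination e3
    rw [hv1]
    field_simp
    ring
  obtain ⟨d0, hd0⟩ : ∃ d0, h 0 = d0 := ⟨_, rfl⟩
  have step4 : ∀ τ ∈ Set.Ioo (-1:ℝ) 1,
      HasDerivAt (fun t => a t * ((1-t^2)^p)⁻¹ - d0 * F t) 0 τ := by
    intro τ hτ
    have hPpos : (0:ℝ) < 1 - τ^2 := by nlinarith [hτ.1, hτ.2]
    have hPne : (1:ℝ) - τ^2 ≠ 0 := ne_of_gt hPpos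
    have hPne' : ((1:ℝ) - τ^2)^(p+1) ≠ 0 := pow_ne_zero _ hPne
    have hvne : (1-τ^2)^p ≠ 0 := pow_ne_zero _ hPne
    have Hinv : HasDerivAt (fun t : ℝ => ((1-t^2)^p)⁻¹)
        (-((p:ℝ) * (1-τ^2)^(p-1) * (-(2*τ))) / ((1-τ^2)^p)^2) τ := (jacU p τ).inv hvne
    have HG := (((ha τ hτ).hasDerivAt).mul Hinv).sub ((ftcJ p hτ).const_mul d0)
    refine HG.congr_deriv (Eq.symm ?_)
    have h4 : (1-τ^2) * W τ * ((1-τ^2)^p)⁻¹ = d0 := by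
      have := constIoo step1 hτ h0I
      rw [hd0] at this
      simpa only [hh] using this
    have hWval : (1-τ^2) * W τ = d0 * (1-τ^2)^p := by
      rw [← h4]
      field_simp
    have hv1 : ((p:ℝ) * (1-τ^2)^(p-1) * (-(2*τ)))
        = -2*(p:ℝ)*τ*(1-τ^2)^p / (1-τ^2) := by
      rw [eq_div_iff hPne]
      linear_combination key1U p τ
    have hWW : deriv a τ = (W τ + a τ * ((p:ℝ) * (1-τ^2)^(p-1) * (-(2*τ)))) / (1-τ^2)^p := by
      rw [eq_div_iff hvne]
      simp only [hW]; ring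
    rw [hWW, hv1]
    field_simp
    linear_combination (-(1-τ^2)^(p+1)) * hWval
  refine ⟨(fun t => a t * ((1-t^2)^p)⁻¹ - d0 * F t) 0, d0, fun τ hτ => ?_⟩
  have hPpos : (0:ℝ) < 1 - τ^2 := by nlinarith [hτ.1, hτ.2]
  have hvne : (1-τ^2)^p ≠ 0 := ne_of_gt (by positivity)
  have h5 : a τ * ((1-τ^2)^p)⁻¹ - d0 * F τ
      = (fun t => a t * ((1-t^2)^p)⁻¹ - d0 * F t) 0 := constIoo step4 hτ h0I
  rw [← h5]
  field_simp
  simp only [hF, one_div]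
  ring

/-- Borderline case `ℓ = p` of the Jacobi-type ODE: a twice differentiable `a` on `(−1,1)`
satisfies `(1−τ²)a'' + 2(p−1)τ a' + 2p a = 0` if and only if
`a(τ) = ((1−τ)/2)^p ((1+τ)/2)^p (c + d ∫₀^τ (1−s²)^{−(p+1)} ds)` for some constants `c, d`. -/
theorem stmt9 (p : ℕ) (a : ℝ → ℝ)
    (ha : ∀ τ ∈ Set.Ioo (-1 : ℝ) 1, DifferentiableAt ℝ a τ)
    (ha' : ∀ τ ∈ Set.Ioo (-1 : ℝ) 1, DifferentiableAt ℝ (deriv a) τ) :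
    (∀ τ ∈ Set.Ioo (-1 : ℝ) 1,
        (1 - τ ^ 2) * deriv (deriv a) τ + 2 * ((p : ℝ) - 1) * τ * deriv a τ
          + 2 * (p : ℝ) * a τ = 0)
      ↔ ∃ c d : ℝ, ∀ τ ∈ Set.Ioo (-1 : ℝ) 1,
          a τ = ((1 - τ) / 2) ^ p * ((1 + τ) / 2) ^ p *
            (c + d * ∫ s in (0 : ℝ)..τ, ((1 - s ^ 2) ^ (p + 1))⁻¹) := by
  constructor
  · intro hode
    obtain ⟨c, d, hcd⟩ := mpDir p a ha ha' hode
    refine ⟨4^p * c, 4^p * d, fun τ hτ => ?_⟩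
    have hw : ((1 - τ)/2)^p * ((1 + τ)/2)^p * 4^p = (1 - τ^2)^p := by
      rw [← mul_pow, ← mul_pow]; congr 1; ring
    rw [hcd τ hτ, ← hw]; ring
  · rintro ⟨c, d, hcd⟩
    apply mprDir p a c d
    intro τ hτ
    have hw2 : ((1 - τ)/2) * ((1 + τ)/2) = (1-τ^2)/4 := by ring
    rw [hcd τ hτ, ← mul_pow, hw2]
end

section
/- Let p ≥ 1 be an integer and define F : (−1,1) → ℝ by F(τ) = (1−τ²)^p ∫₀^τ (1−s²)^{−(p+1)} ds. Then F extends to a function of class C^{p−1} on the closed interval [−1,1], but the p-th derivative of F is unbounded on (0,1). -/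
open Real Set Filter Polynomial intervalIntegral
open scoped Topology ContDiff

/-! Auxiliary lemmas -/

lemma cont_xnlog (n : ℕ) : Continuous (fun x : ℝ => x ^ (n+1) * Real.log x) := by
  have : (fun x : ℝ => x ^ (n+1) * Real.log x) = fun x : ℝ => x ^ n * (x * Real.log x) := by
    funext x; ring
  rw [this]
  exact (continuous_pow n).mul Real.continuous_mul_log

lemma hasDerivAt_xnlog (n : ℕ) (hn : 1 ≤ n) (x : ℝ) :
    HasDerivAt (fun x : ℝ => x ^ (n+1) * Real.log x)
      ((n+1 : ℝ) * (x ^ n * Real.log x) + x ^ n) x := by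
  rcases eq_or_ne x 0 with rfl | hx
  · have h0 : ((n:ℝ)+1) * ((0:ℝ) ^ n * Real.log 0) + (0:ℝ) ^ n = 0 := by
      rw [zero_pow (by omega)]; simp
    rw [h0, hasDerivAt_iff_tendsto_slope]
    have hs : ∀ y : ℝ, y ≠ 0 → slope (fun x : ℝ => x ^ (n+1) * Real.log x) 0 y
        = y ^ n * Real.log y := by
      intro y hy
      rw [slope_def_field]
      field_simp
      ring
    have hcont : Tendsto (fun y : ℝ => y ^ n * Real.log y) (𝓝[≠] (0:ℝ)) (𝓝 0) := by
      have := (cont_xnlog (n-1)).tendsto 0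
      rw [show (n-1)+1 = n by omega] at this
      rw [zero_pow (by omega), zero_mul] at this
      exact this.mono_left nhdsWithin_le_nhds
    refine hcont.congr' ?_
    filter_upwards [self_mem_nhdsWithin] with y hy
    exact (hs y hy).symm
  · have h1 : HasDerivAt (fun x : ℝ => x ^ (n+1)) ((n+1 : ℝ) * x ^ n) x := by
      simpa using hasDerivAt_pow (n+1) x
    have := h1.mul (Real.hasDerivAt_log hx)
    refine this.congr_deriv ?_
    field_simp
    ring

lemma contDiff_xnlog : ∀ n : ℕ, ContDiff ℝ (n : WithTop ℕ∞) (fun x : ℝ => x ^ (n+1) * Real.log x) := by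
  intro n
  induction n with
  | zero => simpa [contDiff_zero] using cont_xnlog 0
  | succ n ih =>
    have hcast : ((n+1 : ℕ) : WithTop ℕ∞) = (n : WithTop ℕ∞) + 1 := by push_cast; ring
    rw [hcast, contDiff_succ_iff_deriv]
    refine ⟨fun x => (hasDerivAt_xnlog (n+1) (by omega) x).differentiableAt, ?_, ?_⟩
    · intro h; exact absurd h (by simp)
    · have hd : deriv (fun x : ℝ => x ^ (n+1+1) * Real.log x)
          = fun x : ℝ => ((n:ℝ)+1+1) * (x ^ (n+1) * Real.log x) + x ^ (n+1) := by
        funext x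
        have := (hasDerivAt_xnlog (n+1) (by omega) x).deriv
        rw [this]; push_cast; ring
      rw [hd]
      exact (contDiff_const.mul ih).add (contDiff_id.pow (n+1))

lemma sq_lt (s : ℝ) (hs : s ∈ Ioo (-1:ℝ) 1) : (0:ℝ) < 1 - s^2 := by
  obtain ⟨h1, h2⟩ := hs; nlinarith

lemma uIcc_sub (τ : ℝ) (hτ : τ ∈ Ioo (-1:ℝ) 1) : uIcc (0:ℝ) τ ⊆ Ioo (-1:ℝ) 1 :=
  (ordConnected_Ioo).uIcc_subset (by norm_num) hτ

lemma intgr (m : ℕ) (τ : ℝ) (hτ : τ ∈ Ioo (-1:ℝ) 1) :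
    IntervalIntegrable (fun s : ℝ => ((1-s^2)^m)⁻¹) MeasureTheory.volume 0 τ := by
  apply ContinuousOn.intervalIntegrable
  apply ContinuousOn.inv₀
  · exact Continuous.continuousOn (by continuity)
  · intro s hs
    exact ne_of_gt (pow_pos (sq_lt s (uIcc_sub τ hτ hs)) m)

lemma intLemma : ∀ n : ℕ, ∃ c : ℝ, 0 < c ∧ ∃ Q : Polynomial ℝ, ∀ τ ∈ Ioo (-1:ℝ) 1,
    (1 - τ^2)^n * ∫ s in (0:ℝ)..τ, ((1 - s^2)^(n+1))⁻¹
      = Q.eval τ + c * (1 - τ^2)^n * (Real.log (1+τ) - Real.log (1-τ)) := by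
  intro n
  induction n with
  | zero =>
    refine ⟨1/2, by norm_num, 0, fun τ hτ => ?_⟩
    have hFTC : ∫ s in (0:ℝ)..τ, ((1 - s^2)^(0+1))⁻¹
        = (1/2) * (Real.log (1+τ) - Real.log (1-τ)) - (1/2) * (Real.log (1+0) - Real.log (1-0)) := by
      apply intervalIntegral.integral_eq_sub_of_hasDerivAt
      · intro s hs
        have hs' := uIcc_sub τ hτ hs
        have h1p : (0:ℝ) < 1 + s := by linarith [hs'.1]
        have h1m : (0:ℝ) < 1 - s := by linarith [hs'.2]
        have hl1 : HasDerivAt (fun s : ℝ => Real.log (1+s)) ((1+s)⁻¹) s := by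
          have := (Real.hasDerivAt_log (ne_of_gt h1p)).comp s ((hasDerivAt_id s).const_add 1)
          simpa [Function.comp_def] using this
        have hl2 : HasDerivAt (fun s : ℝ => Real.log (1-s)) (-(1-s)⁻¹) s := by
          have := (Real.hasDerivAt_log (ne_of_gt h1m)).comp s ((hasDerivAt_id s).const_sub 1)
          simpa [Function.comp_def] using this
        have := (hl1.sub hl2).const_mul (1/2 : ℝ)
        refine this.congr_deriv ?_
        have : 1 - s^2 = (1+s)*(1-s) := by ring
        rw [this]
        field_simp
        ring
      · exact intgr 1 τ hτ
    rw [hFTC]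
    simp
  | succ n ih =>
    obtain ⟨c, hc, Q, hQ⟩ := ih
    set rm : ℝ := (n:ℝ) + 1 with hrm
    have hrmpos : (0:ℝ) < rm := by positivity
    set r : ℝ := (2*rm - 1)/(2*rm) with hr
    have hrpos : 0 < r := by
      apply div_pos <;> [skip; positivity]
      simp only [hrm]; linarith
    refine ⟨r * c, mul_pos hrpos hc, Polynomial.C (1/(2*rm)) * Polynomial.X
      + Polynomial.C r * (1 - Polynomial.X^2) * Q, fun τ hτ => ?_⟩
    have hne : (1 - τ^2) ≠ 0 := ne_of_gt (sq_lt τ hτ)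
    have hpow : ((1:ℝ) - τ^2)^(n+1) ≠ 0 := pow_ne_zero _ hne
    have key : (∫ s in (0:ℝ)..τ, ((1 - s^2)^(n+1+1))⁻¹)
        = τ/(2*rm) * ((1-τ^2)^(n+1))⁻¹ + r * ∫ s in (0:ℝ)..τ, ((1 - s^2)^(n+1))⁻¹ := by
      have hFTC : ∫ s in (0:ℝ)..τ, (((1 - s^2)^(n+1+1))⁻¹ - r * ((1 - s^2)^(n+1))⁻¹)
          = τ/(2*rm) * ((1-τ^2)^(n+1))⁻¹ - 0/(2*rm) * ((1-0^2)^(n+1))⁻¹ := by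
        apply intervalIntegral.integral_eq_sub_of_hasDerivAt
        · intro s hs
          have hs' := uIcc_sub τ hτ hs
          have hup : (0:ℝ) < 1 - s^2 := sq_lt s hs'
          have hune : ((1:ℝ) - s^2)^(n+1) ≠ 0 := pow_ne_zero _ (ne_of_gt hup)
          have h2 : HasDerivAt (fun s : ℝ => 1 - s^2) (-(2*s)) s := by
            simpa using ((hasDerivAt_pow 2 s).const_sub 1)
          have hu : HasDerivAt (fun s : ℝ => (1-s^2)^(n+1))
              (((n:ℝ)+1) * (1-s^2)^n * (-(2*s))) s := by
            have := h2.pow (n+1)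
            simp at this ⊢; exact this
          have hinv := hu.inv hune
          have hlin : HasDerivAt (fun s : ℝ => s/(2*rm)) (1/(2*rm)) s := by
            simpa using (hasDerivAt_id s).div_const (2*rm)
          have := hlin.mul hinv
          refine this.congr_deriv ?_
          rw [hr, hrm]
          simp only [Pi.inv_apply]
          field_simp
          ring
        · exact ((intgr (n+2) τ hτ).sub ((intgr (n+1) τ hτ).const_mul r))
      rw [intervalIntegral.integral_sub (intgr (n+2) τ hτ) ((intgr (n+1) τ hτ).const_mul r),
        intervalIntegral.integral_const_mul] at hFTC
      have := hFTC
      simp only [zero_div, zero_mul, sub_zero] at this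
      linarith [this]
    set I1 : ℝ := ∫ s in (0:ℝ)..τ, ((1 - s^2)^(n+1))⁻¹ with hI1
    have hIQ : (1-τ^2)^n * I1 = Q.eval τ + c * (1-τ^2)^n * (Real.log (1+τ) - Real.log (1-τ)) :=
      hQ τ hτ
    calc (1 - τ^2)^(n+1) * ∫ s in (0:ℝ)..τ, ((1 - s^2)^(n+1+1))⁻¹
        = (1 - τ^2)^(n+1) * (τ/(2*rm) * ((1-τ^2)^(n+1))⁻¹ + r * I1) := by rw [key]
      _ = τ/(2*rm) * ((1-τ^2)^(n+1) * ((1-τ^2)^(n+1))⁻¹)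
            + r * (1-τ^2) * ((1-τ^2)^n * I1) := by ring
      _ = τ/(2*rm) + r * (1-τ^2) * (Q.eval τ + c * (1-τ^2)^n
            * (Real.log (1+τ) - Real.log (1-τ))) := by rw [mul_inv_cancel₀ hpow, hIQ]; ring
      _ = _ := by simp only [Polynomial.eval_add, Polynomial.eval_mul, Polynomial.eval_C,
            Polynomial.eval_X, Polynomial.eval_sub, Polynomial.eval_pow, Polynomial.eval_one]
                  ring

lemma contDiff_polyeval (Q : Polynomial ℝ) {n : WithTop ℕ∞} :
    ContDiff ℝ n (fun x : ℝ => Q.eval x) := by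
  induction Q using Polynomial.induction_on' with
  | add p q hp hq => simpa [Polynomial.eval_add] using hp.add hq
  | monomial k a =>
    simpa [Polynomial.eval_monomial] using contDiff_const.mul (contDiff_id.pow k)

lemma claimLemma (p : ℕ) (c : ℝ) (Q : Polynomial ℝ) (F : ℝ → ℝ)
    (hF : ∀ τ ∈ Ioo (-1:ℝ) 1,
      F τ = Q.eval τ + c * (1-τ^2)^p * (Real.log (1+τ) - Real.log (1-τ))) :
    ∀ k, k ≤ p → ∃ g : ℝ → ℝ, ∃ v : Polynomial ℝ,
      ContDiffOn ℝ ∞ g (Ioo (-1:ℝ) 3) ∧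
      (∀ τ ∈ Ioo (0:ℝ) 1, deriv^[k] F τ
        = g τ + (1-τ)^(p-k) * v.eval τ * Real.log (1-τ)) ∧
      v.eval 1 = (-1:ℝ)^(k+1) * c * 2^p * (p.descFactorial k) := by
  intro k
  induction k with
  | zero =>
    intro _
    refine ⟨fun τ => Q.eval τ + c * ((1-τ)*(1+τ))^p * Real.log (1+τ),
      Polynomial.C (-c) * (1+Polynomial.X)^p, ?_, ?_, ?_⟩
    · apply ContDiffOn.add ((contDiff_polyeval Q).contDiffOn)
      apply ContDiffOn.mul
      · exact (contDiff_const.mul (((contDiff_const.sub contDiff_id).mul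
          (contDiff_const.add contDiff_id)).pow p)).contDiffOn
      · intro x hx
        have hx1 : (1:ℝ) + x ≠ 0 := by have := hx.1; simp at this ⊢; linarith
        exact ((Real.contDiffAt_log.2 hx1).comp x
          ((contDiff_const.add contDiff_id).contDiffAt)).contDiffWithinAt
    · intro τ hτ
      have hτ' : τ ∈ Ioo (-1:ℝ) 1 := ⟨by linarith [hτ.1], hτ.2⟩
      simp only [Function.iterate_zero_apply, Nat.sub_zero]
      rw [hF τ hτ']
      have h12 : ((1:ℝ)-τ^2)^p = ((1-τ)*(1+τ))^p := by ring_nf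
      rw [h12]
      simp only [Polynomial.eval_mul, Polynomial.eval_pow, Polynomial.eval_add,
        Polynomial.eval_C, Polynomial.eval_X, Polynomial.eval_one, mul_pow]
      ring
    · simp only [Polynomial.eval_mul, Polynomial.eval_C, Polynomial.eval_pow,
        Polynomial.eval_add, Polynomial.eval_one, Polynomial.eval_X, Nat.descFactorial_zero]
      norm_num
  | succ k ih =>
    intro hk1
    have hk : k ≤ p := by omega
    obtain ⟨g, v, hg, hFk, hv1⟩ := ih hk
    set j : ℕ := p - (k+1) with hjdef
    have hj : p - k = j + 1 := by omega
    set v₁ : Polynomial ℝ := (1 - Polynomial.X) * v.derivative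
      - Polynomial.C ((j:ℝ)+1) * v with hv₁
    have hder : ((1 - Polynomial.X)^(j+1) * v).derivative = (1 - Polynomial.X)^j * v₁ := by
      rw [hv₁]
      simp only [Polynomial.derivative_mul, Polynomial.derivative_pow,
        Polynomial.derivative_sub, Polynomial.derivative_one, Polynomial.derivative_X,
        Nat.add_sub_cancel, map_add, map_natCast, map_one]
      push_cast
      ring
    refine ⟨fun τ => deriv g τ - (1-τ)^j * v.eval τ, v₁, ?_, ?_, ?_⟩
    · apply ContDiffOn.sub
      · exact ((contDiffOn_infty_iff_deriv_of_isOpen isOpen_Ioo).1 hg).2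
      · exact (((contDiff_const.sub contDiff_id).pow j).mul (contDiff_polyeval v)).contDiffOn
    · intro τ hτ
      have hτ13 : τ ∈ Ioo (-1:ℝ) 3 := ⟨by linarith [hτ.1], by linarith [hτ.2]⟩
      have h1m : (0:ℝ) < 1 - τ := by linarith [hτ.2]
      have hEq : deriv^[k] F =ᶠ[𝓝 τ]
          (fun x => g x + (1-x)^(p-k) * v.eval x * Real.log (1-x)) := by
        filter_upwards [isOpen_Ioo.mem_nhds hτ] with x hx using hFk x hx
      have hgd : HasDerivAt g (deriv g τ) τ :=
        (((hg.differentiableOn (by simp)).differentiableAt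
          (isOpen_Ioo.mem_nhds hτ13))).hasDerivAt
      have ha : HasDerivAt (fun x : ℝ => ((1 - Polynomial.X)^(j+1) * v).eval x)
          (((1 - Polynomial.X)^(j+1) * v).derivative.eval τ) τ :=
        Polynomial.hasDerivAt _ τ
      have hlog : HasDerivAt (fun x : ℝ => Real.log (1-x)) (-(1-τ)⁻¹) τ := by
        have := (Real.hasDerivAt_log (ne_of_gt h1m)).comp τ ((hasDerivAt_id τ).const_sub 1)
        simpa [Function.comp_def] using this
      have htot := (hgd.add (ha.mul hlog))
      have hfeq : (fun x => g x + (1-x)^(p-k) * v.eval x * Real.log (1-x))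
          = (fun x => g x + ((1 - Polynomial.X)^(j+1) * v).eval x * Real.log (1-x)) := by
        funext x
        simp [hj]
      calc deriv^[k+1] F τ = deriv (deriv^[k] F) τ := by rw [Function.iterate_succ_apply']
        _ = deriv (fun x => g x + (1-x)^(p-k) * v.eval x * Real.log (1-x)) τ := hEq.deriv_eq
        _ = deriv g τ + (((1 - Polynomial.X)^(j+1) * v).derivative.eval τ * Real.log (1-τ)
              + ((1 - Polynomial.X)^(j+1) * v).eval τ * (-(1-τ)⁻¹)) := by
            rw [hfeq]; exact htot.deriv
        _ = (deriv g τ - (1-τ)^j * v.eval τ) + (1-τ)^j * v₁.eval τ * Real.log (1-τ) := by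
            rw [hder]
            simp only [Polynomial.eval_mul, Polynomial.eval_pow, Polynomial.eval_sub,
              Polynomial.eval_one, Polynomial.eval_X]
            rw [pow_succ]
            field_simp
            ring
    · have hdesc : (p.descFactorial (k+1) : ℝ) = ((j:ℝ)+1) * (p.descFactorial k : ℝ) := by
        rw [Nat.descFactorial_succ]
        push_cast
        have : (p - k : ℕ) = j + 1 := hj
        rw [this]
        push_cast
        ring
      rw [hv₁]
      simp only [Polynomial.eval_sub, Polynomial.eval_mul, Polynomial.eval_one,
        Polynomial.eval_X, Polynomial.eval_C, hv1, hdesc]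
      ring

/-- For `p ≥ 1`, the function `F(τ) = (1−τ²)^p ∫₀^τ (1−s²)^{−(p+1)} ds` extends to a
function of class `C^{p−1}` on `[−1,1]`, but its `p`-th derivative is unbounded on `(0,1)`. -/
theorem stmt11 (p : ℕ) (hp : 1 ≤ p) :
    let F : ℝ → ℝ := fun τ => (1 - τ ^ 2) ^ p * ∫ s in (0 : ℝ)..τ, ((1 - s ^ 2) ^ (p + 1))⁻¹
    (∃ G : ℝ → ℝ, ContDiffOn ℝ ((p - 1 : ℕ) : ℕ∞) G (Set.Icc (-1 : ℝ) 1) ∧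
      ∀ τ ∈ Set.Ioo (-1 : ℝ) 1, G τ = F τ) ∧
    ¬ ∃ M : ℝ, ∀ τ ∈ Set.Ioo (0 : ℝ) 1, |deriv^[p] F τ| ≤ M := by
  intro F
  obtain ⟨c, hc, Q, hQ⟩ := intLemma p
  have hFid : ∀ τ ∈ Ioo (-1:ℝ) 1,
      F τ = Q.eval τ + c * (1-τ^2)^p * (Real.log (1+τ) - Real.log (1-τ)) := by
    intro τ hτ
    exact hQ τ hτ
  constructor
  · -- C^{p-1} extension
    set h : ℝ → ℝ := fun x => x^p * Real.log x with hdef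
    have hcd : ContDiff ℝ (((p-1:ℕ)) : WithTop ℕ∞) h := by
      have := contDiff_xnlog (p-1)
      rw [show (p-1)+1 = p by omega] at this
      exact this
    refine ⟨fun τ => Q.eval τ + c * ((1-τ)^p * h (1+τ) - (1+τ)^p * h (1-τ)), ?_, ?_⟩
    · have hG : ContDiff ℝ (((p-1:ℕ)) : WithTop ℕ∞)
          (fun τ : ℝ => Q.eval τ + c * ((1-τ)^p * h (1+τ) - (1+τ)^p * h (1-τ))) := by
        apply (contDiff_polyeval Q).add
        apply contDiff_const.mul
        apply ContDiff.sub
        · exact ((contDiff_const.sub contDiff_id).pow p).mul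
            (hcd.comp (contDiff_const.add contDiff_id))
        · exact ((contDiff_const.add contDiff_id).pow p).mul
            (hcd.comp (contDiff_const.sub contDiff_id))
      exact hG.contDiffOn
    · intro τ hτ
      rw [hFid τ hτ]
      have h1p : (0:ℝ) < 1 + τ := by linarith [hτ.1]
      have h1m : (0:ℝ) < 1 - τ := by linarith [hτ.2]
      have h12 : ((1:ℝ)-τ^2)^p = (1-τ)^p*(1+τ)^p := by rw [← mul_pow]; ring_nf
      simp only [hdef]
      rw [h12]
      ring
  · -- unboundedness of the p-th derivative
    obtain ⟨g, v, hg, hFp, hv1⟩ := claimLemma p c Q F hFid p le_rfl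
    rintro ⟨M, hM⟩
    have hvne : (0:ℝ) < |v.eval 1| := by
      rw [hv1, abs_mul, abs_mul, abs_mul]
      have h1 : |(-1:ℝ)^(p+1)| = 1 := by
        rw [abs_pow]; norm_num
      rw [h1]
      have h2 : (0:ℝ) < (p.descFactorial p : ℝ) := by
        rw [Nat.descFactorial_self]
        exact_mod_cast Nat.factorial_pos p
      rw [abs_of_pos hc, abs_of_pos (by positivity : (0:ℝ) < (2:ℝ)^p),
        abs_of_pos h2]
      positivity
    have hvt : Tendsto (fun τ : ℝ => |v.eval τ|) (𝓝[<] (1:ℝ)) (𝓝 |v.eval 1|) := by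
      exact (((contDiff_polyeval v (n := 0)).continuous.abs).tendsto 1).mono_left
        nhdsWithin_le_nhds
    have h1t : Tendsto (fun τ : ℝ => 1 - τ) (𝓝[<] (1:ℝ)) (𝓝[>] (0:ℝ)) := by
      apply tendsto_nhdsWithin_of_tendsto_nhds_of_eventually_within
      · have : Tendsto (fun τ : ℝ => 1 - τ) (𝓝 (1:ℝ)) (𝓝 (0:ℝ)) := by
          have hcont : Continuous (fun τ : ℝ => (1:ℝ) - τ) :=
            continuous_const.sub continuous_id
          have := hcont.tendsto (1:ℝ)
          simpa using this
        exact this.mono_left nhdsWithin_le_nhds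
      · filter_upwards [self_mem_nhdsWithin] with x hx
        simp only [mem_Ioi]
        have : x < 1 := hx
        linarith
    have hlogt : Tendsto (fun τ : ℝ => |Real.log (1-τ)|) (𝓝[<] (1:ℝ)) atTop :=
      tendsto_abs_atBot_atTop.comp (Real.tendsto_log_nhdsGT_zero.comp h1t)
    have habs : Tendsto (fun τ : ℝ => |v.eval τ| * |Real.log (1-τ)|) (𝓝[<] (1:ℝ)) atTop :=
      Tendsto.pos_mul_atTop hvne hvt hlogt
    have hgt : Tendsto g (𝓝[<] (1:ℝ)) (𝓝 (g 1)) := by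
      have hcont : ContinuousAt g 1 :=
        (hg.continuousOn.continuousAt (isOpen_Ioo.mem_nhds (by norm_num)))
      exact hcont.tendsto.mono_left nhdsWithin_le_nhds
    have E1 : ∀ᶠ τ in (𝓝[<] (1:ℝ)), τ ∈ Ioo (0:ℝ) 1 :=
      Ioo_mem_nhdsLT_of_mem (by norm_num : (1:ℝ) ∈ Ioc (0:ℝ) 1)
    have E2 : ∀ᶠ τ in (𝓝[<] (1:ℝ)), |g τ| < |g 1| + 1 :=
      (hgt.abs).eventually_lt_const (by linarith)
    have E3 : ∀ᶠ τ in (𝓝[<] (1:ℝ)), M + (|g 1| + 1) < |v.eval τ| * |Real.log (1-τ)| :=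
      habs.eventually_gt_atTop _
    obtain ⟨τ, hτIoo, hgτ, hbig⟩ := (E1.and (E2.and E3)).exists
    have hval : deriv^[p] F τ = g τ + v.eval τ * Real.log (1-τ) := by
      have := hFp τ hτIoo
      simpa [Nat.sub_self] using this
    have hMτ := hM τ hτIoo
    rw [hval] at hMτ
    have hlow : |v.eval τ| * |Real.log (1-τ)| - |g τ| ≤ |g τ + v.eval τ * Real.log (1-τ)| := by
      have h2 := abs_sub_abs_le_abs_sub (v.eval τ * Real.log (1-τ)) (-(g τ))
      rw [abs_neg, sub_neg_eq_add, abs_mul, add_comm] at h2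
      exact h2
    linarith
end

section
/- Let ε₀ > 0, C > 0, Ω ≥ 0 and C₁ < 0 be real numbers. Suppose f : [0, ε₀] → ℝ is nonnegative, bounded, continuous on [0, ε₀], differentiable on (0, ε₀], and satisfies the differential inequality t·f'(t) ≤ C·(Ω + C₁·f(t)) for all t ∈ (0, ε₀]. Then f(ε₀) ≤ Ω / (−C₁). -/
open Real Filter Set

/-- Degenerate Grönwall-type lemma: if `f ≥ 0` is bounded, continuous on `[0, ε₀]`,
differentiable on `(0, ε₀]`, and satisfies `t f'(t) ≤ C (Ω + C₁ f(t))` there, with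
`C > 0`, `Ω ≥ 0` and `C₁ < 0`, then `f(ε₀) ≤ Ω / (−C₁)`. -/
theorem stmt14 (ε₀ C Ω C₁ : ℝ) (hε : 0 < ε₀) (hC : 0 < C) (hΩ : 0 ≤ Ω) (hC₁ : C₁ < 0)
    (f : ℝ → ℝ)
    (hnonneg : ∀ t ∈ Set.Icc (0 : ℝ) ε₀, 0 ≤ f t)
    (hbdd : ∃ M : ℝ, ∀ t ∈ Set.Icc (0 : ℝ) ε₀, f t ≤ M)
    (hcont : ContinuousOn f (Set.Icc (0 : ℝ) ε₀))
    (hdiff : ∀ t ∈ Set.Ioc (0 : ℝ) ε₀, DifferentiableAt ℝ f t)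
    (hineq : ∀ t ∈ Set.Ioc (0 : ℝ) ε₀, t * deriv f t ≤ C * (Ω + C₁ * f t)) :
    f ε₀ ≤ Ω / (-C₁) := by
  obtain ⟨M, hM⟩ := hbdd
  set p : ℝ := -(C * C₁) with hp
  have hppos : 0 < p := by
    have := mul_neg_of_pos_of_neg hC hC₁
    simp only [hp]; linarith
  set g : ℝ → ℝ := fun t => (Ω + C₁ * f t) * t ^ p with hg
  -- derivative of g at points of (0, ε₀]
  have hgderiv : ∀ t ∈ Set.Ioc (0 : ℝ) ε₀,
      HasDerivAt g (C₁ * deriv f t * t ^ p + (Ω + C₁ * f t) * (p * t ^ (p - 1))) t := by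
    intro t ht
    have hft : HasDerivAt f (deriv f t) t := (hdiff t ht).hasDerivAt
    have h1 : HasDerivAt (fun t => Ω + C₁ * f t) (C₁ * deriv f t) t := by
      have := (hasDerivAt_const t Ω).add ((hft.const_mul C₁))
      rw [zero_add] at this; exact this
    have h2 : HasDerivAt (fun t : ℝ => t ^ p) (p * t ^ (p - 1)) t :=
      Real.hasDerivAt_rpow_const (Or.inl (ne_of_gt ht.1))
    exact h1.mul h2
  have hgderiv_nonneg : ∀ t ∈ Set.Ioc (0 : ℝ) ε₀,
      0 ≤ C₁ * deriv f t * t ^ p + (Ω + C₁ * f t) * (p * t ^ (p - 1)) := by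
    intro t ht
    have ht0 : 0 < t := ht.1
    have hkey := hineq t ht
    have hA : (0:ℝ) < t ^ (p - 1) := Real.rpow_pos_of_pos ht0 _
    have htp : t ^ p = t * t ^ (p - 1) := by
      nth_rewrite 1 [show p = 1 + (p - 1) by ring]
      rw [Real.rpow_add ht0, Real.rpow_one]
    have heq : C₁ * deriv f t * t ^ p + (Ω + C₁ * f t) * (p * t ^ (p - 1))
        = t ^ (p - 1) * (C₁ * (t * deriv f t - C * (Ω + C₁ * f t))) := by
      rw [htp, hp]; ring
    rw [heq]
    refine mul_nonneg hA.le ?_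
    nlinarith
  -- monotonicity of g on [s, ε₀]
  have hmono : ∀ s ∈ Set.Ioo (0 : ℝ) ε₀, g s ≤ g ε₀ := by
    intro s hs
    have hsub : Set.Icc s ε₀ ⊆ Set.Icc 0 ε₀ := Set.Icc_subset_Icc hs.1.le le_rfl
    have hcg : ContinuousOn g (Set.Icc s ε₀) := by
      apply ContinuousOn.mul
      · exact continuousOn_const.add (continuousOn_const.mul (hcont.mono hsub))
      · exact continuousOn_id.rpow_const (fun x hx => Or.inr hppos.le)
    have hint : interior (Set.Icc s ε₀) = Set.Ioo s ε₀ := interior_Icc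
    have hdg : DifferentiableOn ℝ g (interior (Set.Icc s ε₀)) := by
      rw [hint]; intro x hx
      exact ((hgderiv x ⟨hs.1.trans hx.1, hx.2.le⟩).differentiableAt).differentiableWithinAt
    have hdg' : ∀ x ∈ interior (Set.Icc s ε₀), 0 ≤ deriv g x := by
      rw [hint]; intro x hx
      have hx' : x ∈ Set.Ioc (0:ℝ) ε₀ := ⟨hs.1.trans hx.1, hx.2.le⟩
      rw [(hgderiv x hx').deriv]
      exact hgderiv_nonneg x hx'
    exact monotoneOn_of_deriv_nonneg (convex_Icc s ε₀) hcg hdg hdg'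
      ⟨le_rfl, hs.2.le⟩ ⟨hs.2.le, le_rfl⟩ hs.2.le
  -- lower bound for g s
  set Mx : ℝ := max M 0 with hMx
  have hlow : ∀ s ∈ Set.Ioo (0 : ℝ) ε₀, C₁ * Mx * s ^ p ≤ g ε₀ := by
    intro s hs
    refine le_trans ?_ (hmono s hs)
    have hsp : (0:ℝ) < s ^ p := Real.rpow_pos_of_pos hs.1 _
    have hfs : f s ≤ Mx := le_max_of_le_left (hM s ⟨hs.1.le, hs.2.le⟩)
    have : C₁ * Mx ≤ Ω + C₁ * f s := by nlinarith
    exact mul_le_mul_of_nonneg_right this hsp.le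
  -- take the limit s → 0⁺
  have hlim : Tendsto (fun s : ℝ => C₁ * Mx * s ^ p) (nhdsWithin 0 (Set.Ioi 0)) (nhds 0) := by
    have h1 : Tendsto (fun s : ℝ => s ^ p) (nhds 0) (nhds ((0:ℝ) ^ p)) :=
      (Real.continuousAt_rpow_const 0 p (Or.inr hppos.le)).tendsto
    rw [Real.zero_rpow (ne_of_gt hppos)] at h1
    have h2 : Tendsto (fun s : ℝ => C₁ * Mx * s ^ p) (nhdsWithin 0 (Set.Ioi 0))
        (nhds (C₁ * Mx * 0)) :=
      (h1.const_mul (C₁ * Mx)).mono_left nhdsWithin_le_nhds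
    simpa using h2
  have hge : 0 ≤ g ε₀ := by
    refine le_of_tendsto hlim ?_
    filter_upwards [Ioo_mem_nhdsGT_of_mem ⟨le_refl (0:ℝ), hε⟩] with s hs
    exact hlow s hs
  -- conclude
  have hεp : (0:ℝ) < ε₀ ^ p := Real.rpow_pos_of_pos hε _
  have h0 : 0 ≤ Ω + C₁ * f ε₀ := by
    by_contra h
    push_neg at h
    have : (Ω + C₁ * f ε₀) * ε₀ ^ p < 0 := mul_neg_of_neg_of_pos h hεp
    exact absurd hge (by simpa [hg] using not_le.mpr this)
  rw [le_div_iff₀ (by linarith : 0 < -C₁)]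
  nlinarith
end
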